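/- For u(t) a bounded function on (0,∞) with Laplace transform g(s) = ∫_0^∞ e^{-st} u(t) dt that extends to a function rapidly decreasing in s along the positive real axis (i.e., g(s) = O(s^{-n}) for every n as s → ∞), with the specific form g(s,z) = (1/s)√(πz) e^{-z/2} I_{√(1/4+s)}(z/2), the function u(t,z) (the absorption probability) satisfies u(t,z) ≤ c_n t^n as t → 0+ for every n > 0. -/

import Mathlib

open MeasureTheory ProbabilityTheory Filter Set
open scoped ENNReal NNReal

noncomputable section

/-- Standard Brownian motion with respect to a measure `μ`. -/
structure IsBrownianMotion {Ω : Type*} {mΩ : MeasurableSpace Ω} (μ : Measure Ω)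
    (W : ℝ → Ω → ℝ) : Prop where
  meas : ∀ t, Measurable (W t)
  init : ∀ᵐ ω ∂μ, W 0 ω = 0
  cont : ∀ᵐ ω ∂μ, Continuous fun t => W t ω
  incr : ∀ s t : ℝ, 0 ≤ s → s ≤ t →
    μ.map (fun ω => W t ω - W s ω) = gaussianReal 0 (Real.toNNReal (t - s))
  indep : ∀ n : ℕ, ∀ u : ℕ → ℝ, Monotone u → (∀ i, 0 ≤ u i) →
    iIndepFun (m := fun _ : Fin n => (inferInstance : MeasurableSpace ℝ))
      (fun i : Fin n => fun ω => W (u (i + 1)) ω - W (u i) ω) μ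

/-- Riemann sum along dyadic partitions approximating the Itô integral `∫_0^t H dW`. -/
def itoSum {Ω : Type*} (H W : ℝ → Ω → ℝ) (t : ℝ) (n : ℕ) (ω : Ω) : ℝ :=
  ∑ k ∈ Finset.range (2 ^ n),
    H (t * k / 2 ^ n) ω * (W (t * (k + 1) / 2 ^ n) ω - W (t * k / 2 ^ n) ω)

/-- `I` is the Itô integral process `∫_0^t H dW`: the dyadic Riemann sums converge in
probability to `I t` for every `t ≥ 0`. -/
def IsItoIntegral {Ω : Type*} {mΩ : MeasurableSpace Ω} (μ : Measure Ω)
    (H W I : ℝ → Ω → ℝ) : Prop :=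
  ∀ t : ℝ, 0 ≤ t → TendstoInMeasure μ (fun n => itoSum H W t n) atTop (I t)

/-- `X` solves the SDE `dX_t = b(X_t) dt + σ(X_t) dW_t`, `X_0 = x₀`. -/
def SolvesSDE {Ω : Type*} {mΩ : MeasurableSpace Ω} (μ : Measure Ω)
    (W X : ℝ → Ω → ℝ) (b σ : ℝ → ℝ) (x₀ : ℝ) : Prop :=
  (∀ᵐ ω ∂μ, X 0 ω = x₀) ∧
  ∃ I : ℝ → Ω → ℝ, IsItoIntegral μ (fun t ω => σ (X t ω)) W I ∧
    ∀ t : ℝ, 0 ≤ t → ∀ᵐ ω ∂μ, X t ω = x₀ + (∫ s in (0:ℝ)..t, b (X s ω)) + I t ω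

/-- A process is a local martingale if there is a localizing sequence of stopping times. -/
def IsLocalMartingale {Ω : Type*} {mΩ : MeasurableSpace Ω} (μ : Measure Ω)
    (ℱ : Filtration ℝ mΩ) (X : ℝ → Ω → ℝ) : Prop :=
  ∃ τ : ℕ → Ω → ℝ, (∀ n, IsStoppingTime ℱ (fun ω => ((τ n ω : ℝ) : WithTop ℝ))) ∧
    (∀ᵐ ω ∂μ, Tendsto (fun n => τ n ω) atTop atTop) ∧
    ∀ n, Martingale (MeasureTheory.stoppedProcess X (fun ω => ((τ n ω : ℝ) : WithTop ℝ))) ℱ μ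

/-- A process is a (true) martingale on the time interval `[0, T₀]`. -/
def MartingaleOn {Ω : Type*} {mΩ : MeasurableSpace Ω} (μ : Measure Ω)
    (ℱ : Filtration ℝ mΩ) (X : ℝ → Ω → ℝ) (T₀ : ℝ) : Prop :=
  Adapted ℱ X ∧ (∀ t ∈ Set.Icc (0:ℝ) T₀, Integrable (X t) μ) ∧
  ∀ s t : ℝ, 0 ≤ s → s ≤ t → t ≤ T₀ → μ[X t | ℱ s] =ᵐ[μ] X s

/-- The cumulative distribution function of the standard normal distribution. -/
def stdNormalCDF (z : ℝ) : ℝ := ∫ x in Set.Iic z, gaussianPDFReal 0 1 x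

/-- The modified Bessel function of the second kind of imaginary order `iμ`,
via its real integral representation `K_{iμ}(γ) = ∫_0^∞ e^{-γ cosh t} cos(μ t) dt`. -/
def besselKi (m γ : ℝ) : ℝ :=
  ∫ t in Set.Ioi (0:ℝ), Real.exp (-γ * Real.cosh t) * Real.cos (m * t)

/-- The modified Bessel function of the first kind of real order `l`. -/
def besselI (l x : ℝ) : ℝ :=
  ∑' n : ℕ, (x / 2) ^ (2 * n) * (x / 2) ^ l / (n.factorial * Real.Gamma (n + l + 1))

/-- Kummer's confluent hypergeometric function `M(a, b, z) = ₁F₁(a; b; z)`. -/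
def kummerM (a b z : ℝ) : ℝ :=
  ∑' n : ℕ, ((∏ k ∈ Finset.range n, (a + k)) / (∏ k ∈ Finset.range n, (b + k)))
    * z ^ n / n.factorial

/-- The function `A_c(γ, τ)` from the SABR martingale defect formula. -/
def Ac (γ τ : ℝ) : ℝ :=
  Real.sqrt (2 * γ / Real.pi ^ 3) * Real.exp (-(γ + τ / 8)) *
    ∫ s in Set.Ioi (0:ℝ),
      (8 * s * Real.sinh (Real.pi * s) / (4 * s ^ 2 + 1)) * besselKi s γ *
        Real.exp (-s ^ 2 * τ / 2)

/-- `Y` solves the SDE `dY_t = b(Y_t) dt + σ(Y_t) dW_t`, `Y_0 = y₀`, up to the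
(possibly infinite) explosion time `ζ`. -/
def SolvesSDEUpTo {Ω : Type*} {mΩ : MeasurableSpace Ω} (μ : Measure Ω)
    (W Y : ℝ → Ω → ℝ) (b σ : ℝ → ℝ) (y₀ : ℝ) (ζ : Ω → ℝ≥0∞) : Prop :=
  (∀ᵐ ω ∂μ, Y 0 ω = y₀) ∧
  ∃ I : ℝ → Ω → ℝ,
    (∀ t : ℝ, 0 ≤ t →
      TendstoInMeasure (μ.restrict {ω | ENNReal.ofReal t < ζ ω})
        (fun n => itoSum (fun u ω => σ (Y u ω)) W t n) atTop (I t)) ∧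
    ∀ t : ℝ, 0 ≤ t → ∀ᵐ ω ∂μ.restrict {ω | ENNReal.ofReal t < ζ ω},
      Y t ω = y₀ + (∫ s in (0:ℝ)..t, b (Y s ω)) + I t ω

/-- The first hitting time of zero of a process, as an extended real number. -/
def hitZeroTime {Ω : Type*} (X : ℝ → Ω → ℝ) (ω : Ω) : ℝ≥0∞ :=
  ⨅ (s : {s : ℝ // 0 ≤ s ∧ X s ω = 0}), ENNReal.ofReal s.1


lemma fact_mul_Gamma_le (ν : ℝ) (hν : 0 ≤ ν) :
    ∀ n : ℕ, (n.factorial : ℝ) * Real.Gamma (ν + 1) ≤ Real.Gamma (n + ν + 1) := by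
  intro n
  induction n with
  | zero => simp
  | succ n ih =>
    have h1 : ((n : ℝ) + ν + 1) ≠ 0 := by positivity
    have h2 : Real.Gamma ((n:ℝ) + ν + 1 + 1) = ((n:ℝ) + ν + 1) * Real.Gamma ((n:ℝ) + ν + 1) :=
      Real.Gamma_add_one h1
    have h3 : ((n:ℕ).succ : ℝ) + ν + 1 = (n:ℝ) + ν + 1 + 1 := by push_cast; ring
    rw [h3, h2]
    have hGpos : (0:ℝ) ≤ (n.factorial : ℝ) * Real.Gamma (ν + 1) := by
      have := Real.Gamma_pos_of_pos (show (0:ℝ) < ν + 1 by linarith)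
      positivity
    calc ((n.succ.factorial : ℝ)) * Real.Gamma (ν + 1)
        = ((n:ℝ) + 1) * ((n.factorial : ℝ) * Real.Gamma (ν + 1)) := by
          rw [Nat.factorial_succ]; push_cast; ring
      _ ≤ ((n:ℝ) + ν + 1) * Real.Gamma ((n:ℝ) + ν + 1) := by
          apply mul_le_mul (by linarith) ih hGpos (by linarith)

lemma besselI_term_le (ν x : ℝ) (hν : 0 ≤ ν) (hx : 0 < x) (n : ℕ) :
    (x/2) ^ (2*n) * (x/2) ^ ν / ((n.factorial : ℝ) * Real.Gamma (n + ν + 1))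
      ≤ (x/2) ^ ν / Real.Gamma (ν + 1) * (((x/2)^2) ^ n / n.factorial) := by
  have hy0 : 0 < x / 2 := by positivity
  have hG : 0 < Real.Gamma (ν + 1) := Real.Gamma_pos_of_pos (by linarith)
  have hnum : (0:ℝ) ≤ (x/2) ^ (2*n) * (x/2) ^ ν := by positivity
  have hfac1 : (1:ℝ) ≤ (n.factorial : ℝ) := by exact_mod_cast n.factorial_pos
  have hd' : Real.Gamma (ν + 1) ≤ Real.Gamma ((n:ℝ) + ν + 1) :=
    le_trans (le_mul_of_one_le_left hG.le hfac1) (fact_mul_Gamma_le ν hν n)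
  have hd : (n.factorial : ℝ) * Real.Gamma (ν + 1) ≤ (n.factorial : ℝ) * Real.Gamma ((n:ℝ) + ν + 1) :=
    mul_le_mul_of_nonneg_left hd' (by positivity)
  have h1 : (x/2) ^ (2*n) * (x/2) ^ ν / ((n.factorial : ℝ) * Real.Gamma ((n:ℝ) + ν + 1))
      ≤ (x/2) ^ (2*n) * (x/2) ^ ν / ((n.factorial : ℝ) * Real.Gamma (ν + 1)) :=
    div_le_div_of_nonneg_left hnum (by positivity) hd
  refine h1.trans_eq ?_
  rw [pow_mul]
  have hfne : ((n.factorial : ℝ)) ≠ 0 := by positivity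
  field_simp

lemma besselI_le (ν x : ℝ) (hν : 0 ≤ ν) (hx : 0 < x) :
    besselI ν x ≤ (x / 2) ^ ν / Real.Gamma (ν + 1) * ∑' n : ℕ, ((x/2)^2) ^ n / n.factorial := by
  have hG : 0 < Real.Gamma (ν + 1) := Real.Gamma_pos_of_pos (by linarith)
  have hsum2 : Summable (fun n : ℕ => ((x/2)^2) ^ n / n.factorial) :=
    Real.summable_pow_div_factorial _
  have hsum2' : Summable (fun n : ℕ => (x/2) ^ ν / Real.Gamma (ν + 1) * (((x/2)^2) ^ n / n.factorial)) :=
    hsum2.mul_left _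
  have hnn : ∀ n : ℕ, 0 ≤ (x/2) ^ (2*n) * (x/2) ^ ν / ((n.factorial : ℝ) * Real.Gamma (n + ν + 1)) := by
    intro n
    have hGn : 0 < Real.Gamma ((n:ℝ) + ν + 1) := Real.Gamma_pos_of_pos (by positivity)
    positivity
  have hsum1 : Summable (fun n : ℕ =>
      (x/2) ^ (2*n) * (x/2) ^ ν / ((n.factorial : ℝ) * Real.Gamma (n + ν + 1))) :=
    Summable.of_nonneg_of_le hnn (besselI_term_le ν x hν hx) hsum2'
  calc besselI ν x ≤ ∑' n : ℕ, (x/2) ^ ν / Real.Gamma (ν + 1) * (((x/2)^2) ^ n / n.factorial) :=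
        Summable.tsum_le_tsum (besselI_term_le ν x hν hx) hsum1 hsum2'
    _ = (x / 2) ^ ν / Real.Gamma (ν + 1) * ∑' n : ℕ, ((x/2)^2) ^ n / n.factorial :=
        tsum_mul_left


lemma gamma_beats (M : ℕ) (b : ℝ) (hb : 1 ≤ b) :
    ∃ V : ℝ, 1 ≤ V ∧ ∀ ν : ℝ, V ≤ ν → ν ^ M * b ^ ν ≤ Real.Gamma (ν + 1) := by
  set c : ℝ := 2 ^ M * b with hc
  have hc1 : 1 ≤ c := by
    have : (1:ℝ) ≤ 2 ^ M := one_le_pow₀ (by norm_num)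
    nlinarith
  have hc0 : 0 < c := by linarith
  have htend : Tendsto (fun k : ℕ => c ^ (k+1) / k.factorial) atTop (nhds 0) := by
    have h1 : Tendsto (fun k : ℕ => c ^ k / k.factorial) atTop (nhds 0) :=
      (Real.summable_pow_div_factorial c).tendsto_atTop_zero
    have := h1.const_mul c
    simpa [pow_succ, mul_comm, mul_div_assoc, mul_left_comm] using this
  have hev : ∀ᶠ k : ℕ in atTop, c ^ (k+1) / k.factorial ≤ 1 := by
    filter_upwards [htend.eventually (eventually_le_nhds (by norm_num : (0:ℝ) < 1))] with k hk
    exact hk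
  obtain ⟨K, hK⟩ := hev.exists_forall_of_atTop
  refine ⟨(max K 2 : ℕ) + 1, le_add_of_nonneg_left (by positivity), ?_⟩
  intro ν hν
  have hν0 : (0:ℝ) ≤ ν := le_trans (by positivity) hν
  set k : ℕ := ⌊ν⌋₊ with hk
  have hk2 : max K 2 ≤ k := by
    apply Nat.le_floor
    calc ((max K 2 : ℕ) : ℝ) ≤ (max K 2 : ℕ) + 1 := by linarith
      _ ≤ ν := hν
  have hkK : K ≤ k := le_trans (le_max_left _ _) hk2
  have hk2' : 2 ≤ k := le_trans (le_max_right _ _) hk2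
  have hfl : (k : ℝ) ≤ ν := Nat.floor_le hν0
  have hfu : ν < (k : ℝ) + 1 := Nat.lt_floor_add_one ν
  have h1 : ν ^ M ≤ ((k:ℝ) + 1) ^ M := pow_le_pow_left₀ hν0 hfu.le M
  have h2 : b ^ ν ≤ b ^ (((k:ℕ) + 1 : ℕ) : ℝ) := by
    apply Real.rpow_le_rpow_of_exponent_le hb
    push_cast; linarith
  rw [Real.rpow_natCast] at h2
  have h3 : ((k:ℝ) + 1) ^ M ≤ ((2:ℝ) ^ M) ^ (k+1) := by
    have : ((k:ℝ) + 1) ≤ (2:ℝ) ^ (k+1) := by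
      exact_mod_cast (Nat.lt_two_pow_self (n := k+1)).le
    calc ((k:ℝ) + 1) ^ M ≤ ((2:ℝ) ^ (k+1)) ^ M := pow_le_pow_left₀ (by positivity) this M
      _ = ((2:ℝ) ^ M) ^ (k+1) := by rw [← pow_mul, ← pow_mul, Nat.mul_comm]
  have hb0 : 0 < b := by linarith
  have h4 : ν ^ M * b ^ ν ≤ c ^ (k+1) := by
    calc ν ^ M * b ^ ν ≤ ((k:ℝ)+1) ^ M * b ^ (k+1) := by
          apply mul_le_mul h1 h2 (Real.rpow_nonneg hb0.le ν) (by positivity)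
      _ ≤ ((2:ℝ) ^ M) ^ (k+1) * b ^ (k+1) := by
          apply mul_le_mul_of_nonneg_right h3 (by positivity)
      _ = c ^ (k+1) := by rw [hc, mul_pow]
  have h5 : c ^ (k+1) ≤ (k.factorial : ℝ) := by
    have := hK k hkK
    rwa [div_le_one (by positivity : (0:ℝ) < (k.factorial:ℝ))] at this
  have h6 : (k.factorial : ℝ) ≤ Real.Gamma (ν + 1) := by
    rw [← Real.Gamma_nat_eq_factorial k]
    apply Real.Gamma_strictMonoOn_Ici.monotoneOn
    · simp only [mem_Ici]; push_cast; linarith [(show (2:ℝ) ≤ (k:ℝ) by exact_mod_cast hk2')]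
    · simp only [mem_Ici]; linarith [(show (2:ℝ) ≤ (k:ℝ) by exact_mod_cast hk2')]
    · linarith
  linarith

/-- If the bounded, monotone absorption probability `u(·, z)` has Laplace transform
`g(s,z) = (1/s) √(πz) e^{-z/2} I_{√(1/4+s)}(z/2)`, then `u(t,z) ≤ cₙ tⁿ` as `t → 0⁺`
for every `n > 0`. -/
theorem absorption_probability_rapidly_vanishing
    (z : ℝ) (hz : 0 < z) (u : ℝ → ℝ)
    (hbd : ∀ t : ℝ, 0 < t → 0 ≤ u t ∧ u t ≤ 1)
    (hmono : MonotoneOn u (Set.Ioi (0:ℝ)))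
    (hlaplace : ∀ s : ℝ, 0 < s →
      (∫ t in Set.Ioi (0:ℝ), Real.exp (-s * t) * u t)
        = (1 / s) * Real.sqrt (Real.pi * z) * Real.exp (-z / 2)
          * besselI (Real.sqrt (1 / 4 + s)) (z / 2)) :
    ∀ n : ℝ, 0 < n → ∃ c : ℝ, 0 < c ∧ ∃ δ : ℝ, 0 < δ ∧
      ∀ t : ℝ, 0 < t → t < δ → u t ≤ c * t ^ n := by

  intro n hn
  set K0 : ℝ := Real.sqrt (Real.pi * z) * Real.exp (-z / 2) with hK0def
  have hK0 : 0 < K0 := by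
    apply mul_pos (Real.sqrt_pos.2 (by positivity)) (Real.exp_pos _)
  set Cz : ℝ := ∑' m : ℕ, ((z / 2 / 2) ^ 2) ^ m / m.factorial with hCzdef
  have hCz0 : 0 ≤ Cz := tsum_nonneg fun m => by positivity
  set b : ℝ := max (z / 2 / 2) 1 with hbdef
  set M : ℕ := ⌈2 * n⌉₊ with hMdef
  obtain ⟨V, hV1, hV⟩ := gamma_beats M b (le_max_right _ _)
  refine ⟨max 1 (Real.exp 2 * K0 * Cz), lt_of_lt_of_le one_pos (le_max_left _ _),
    1 / V ^ 2, by positivity, ?_⟩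
  intro t ht htδ
  set s : ℝ := 1 / t with hsdef
  have hs : 0 < s := by positivity
  set ν : ℝ := Real.sqrt (1 / 4 + s) with hνdef
  have hν0 : 0 ≤ ν := Real.sqrt_nonneg _
  have hνsq : ν ^ 2 = 1 / 4 + s := Real.sq_sqrt (by positivity)
  have hνV : V ≤ ν := by
    rw [hνdef]
    rw [show V = Real.sqrt (V ^ 2) from (Real.sqrt_sq (by linarith)).symm]
    apply Real.sqrt_le_sqrt
    have h1 : t * V ^ 2 < 1 := (lt_div_iff₀ (by positivity : (0:ℝ) < V ^ 2)).1 htδ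
    have h2 : V ^ 2 < 1 / t := by rw [lt_div_iff₀ ht]; nlinarith
    rw [hsdef]; linarith
  have hν1 : 1 ≤ ν := le_trans hV1 hνV
  -- Step 1: Laplace lower bound
  have hmeasu : AEMeasurable u (volume.restrict (Ioi (0:ℝ))) :=
    aemeasurable_restrict_of_monotoneOn measurableSet_Ioi hmono
  have hexp_meas : Measurable fun r : ℝ => Real.exp (-s * r) :=
    (measurable_id.const_mul (-s)).exp
  have hfmeas : AEStronglyMeasurable (fun r => Real.exp (-s * r) * u r)
      (volume.restrict (Ioi (0:ℝ))) :=
    (hexp_meas.aemeasurable.mul hmeasu).aestronglyMeasurable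
  have hint : IntegrableOn (fun r => Real.exp (-s * r) * u r) (Ioi (0:ℝ)) := by
    apply Integrable.mono' (exp_neg_integrableOn_Ioi 0 hs) hfmeas
    rw [ae_restrict_iff' measurableSet_Ioi]
    filter_upwards with r hr
    obtain ⟨h0, h1⟩ := hbd r hr
    rw [Real.norm_eq_abs, abs_of_nonneg (mul_nonneg (Real.exp_nonneg _) h0)]
    calc Real.exp (-s * r) * u r ≤ Real.exp (-s * r) * 1 :=
          mul_le_mul_of_nonneg_left h1 (Real.exp_nonneg _)
      _ = Real.exp (-s * r) := mul_one _
  have hposae : 0 ≤ᵐ[volume.restrict (Ioi (0:ℝ))] fun r => Real.exp (-s * r) * u r := by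
    filter_upwards [ae_restrict_mem measurableSet_Ioi] with r hr
    exact mul_nonneg (Real.exp_nonneg _) (hbd r hr).1
  have hsub : Ioc t (2 * t) ⊆ Ioi (0:ℝ) := fun r hr => lt_trans ht hr.1
  have hconst : ∫ _ in Ioc t (2 * t), (Real.exp (-s * (2 * t)) * u t)
      = t * (Real.exp (-s * (2 * t)) * u t) := by
    rw [setIntegral_const, measureReal_def, Real.volume_Ioc, smul_eq_mul,
      ENNReal.toReal_ofReal (by linarith : (0:ℝ) ≤ 2 * t - t)]
    ring_nf
  have h2 : ∫ _ in Ioc t (2 * t), (Real.exp (-s * (2 * t)) * u t)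
      ≤ ∫ r in Ioc t (2 * t), Real.exp (-s * r) * u r := by
    apply setIntegral_mono_on (integrableOn_const measure_Ioc_lt_top.ne)
      (hint.mono_set hsub) measurableSet_Ioc
    intro r hr
    have hr0 : r ∈ Ioi (0:ℝ) := hsub hr
    apply mul_le_mul (Real.exp_le_exp.2 (by nlinarith [hr.2, hs.le]))
      (hmono ht hr0 hr.1.le) (hbd t ht).1 (Real.exp_nonneg _)
  have h3 : ∫ r in Ioc t (2 * t), Real.exp (-s * r) * u r
      ≤ ∫ r in Ioi (0:ℝ), Real.exp (-s * r) * u r :=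
    setIntegral_mono_set hint hposae (HasSubset.Subset.eventuallyLE hsub)
  have hg := hlaplace s hs
  have hst : (1:ℝ) / s = t := by rw [hsdef]; field_simp
  have hexp2 : Real.exp (-s * (2 * t)) = Real.exp (-2) := by
    have : -s * (2 * t) = -2 := by rw [hsdef]; field_simp
    rw [this]
  have key : t * (Real.exp (-2) * u t) ≤ t * (K0 * besselI ν (z / 2)) := by
    have := le_trans (le_of_eq hconst.symm) (le_trans h2 h3)
    rw [hexp2] at this
    rw [hg, hst] at this
    calc t * (Real.exp (-2) * u t)
        ≤ t * Real.sqrt (Real.pi * z) * Real.exp (-z / 2) * besselI (Real.sqrt (1/4 + s)) (z / 2) := this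
      _ = t * (K0 * besselI ν (z / 2)) := by rw [hK0def, hνdef]; ring
  have key2 : Real.exp (-2) * u t ≤ K0 * besselI ν (z / 2) :=
    le_of_mul_le_mul_left (by linarith [key]) ht
  have hut : u t ≤ Real.exp 2 * (K0 * besselI ν (z / 2)) := by
    have he : Real.exp 2 * Real.exp (-2) = 1 := by
      rw [← Real.exp_add]; norm_num
    calc u t = Real.exp 2 * Real.exp (-2) * u t := by rw [he, one_mul]
      _ = Real.exp 2 * (Real.exp (-2) * u t) := by ring
      _ ≤ Real.exp 2 * (K0 * besselI ν (z / 2)) := by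
          apply mul_le_mul_of_nonneg_left key2 (Real.exp_nonneg _)
  -- Step 2: bessel bound
  have hbessel : besselI ν (z / 2) ≤ (z / 2 / 2) ^ ν / Real.Gamma (ν + 1) * Cz :=
    besselI_le ν (z / 2) hν0 (by positivity)
  -- Step 3: rpow estimates
  have hΓ : 0 < Real.Gamma (ν + 1) := Real.Gamma_pos_of_pos (by linarith)
  have hbν : (z / 2 / 2 : ℝ) ^ ν ≤ b ^ ν :=
    Real.rpow_le_rpow (by positivity) (le_max_left _ _) hν0
  have hP : 0 < (ν ^ 2 : ℝ) ^ (n : ℝ) := Real.rpow_pos_of_pos (by positivity) n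
  have hMν : (ν ^ 2 : ℝ) ^ (n : ℝ) ≤ ν ^ M := by
    have e1 : (ν ^ 2 : ℝ) ^ (n : ℝ) = ν ^ (2 * n) := by
      rw [← Real.rpow_natCast ν 2, ← Real.rpow_mul hν0]
      norm_num
    have e2 : ν ^ (2 * n) ≤ ν ^ ((M : ℕ) : ℝ) :=
      Real.rpow_le_rpow_of_exponent_le hν1 (Nat.le_ceil (2 * n))
    rw [Real.rpow_natCast] at e2
    rw [e1]; exact e2
  have hprod : (z / 2 / 2 : ℝ) ^ ν * (ν ^ 2 : ℝ) ^ (n : ℝ) ≤ Real.Gamma (ν + 1) := by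
    calc (z / 2 / 2 : ℝ) ^ ν * (ν ^ 2 : ℝ) ^ (n : ℝ) ≤ b ^ ν * ν ^ M := by
          apply mul_le_mul hbν hMν hP.le (Real.rpow_nonneg (by positivity) _)
      _ = ν ^ M * b ^ ν := mul_comm _ _
      _ ≤ Real.Gamma (ν + 1) := hV ν hνV
  have hDiv : (z / 2 / 2 : ℝ) ^ ν / Real.Gamma (ν + 1) ≤ ((ν ^ 2 : ℝ) ^ (n : ℝ))⁻¹ := by
    rw [inv_eq_one_div, div_le_div_iff₀ hΓ hP]
    nlinarith [hprod]
  have htn : ((ν ^ 2 : ℝ) ^ (n : ℝ))⁻¹ ≤ t ^ n := by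
    have hsν : s ≤ ν ^ 2 := by rw [hνsq]; linarith
    have h4 : s ^ n ≤ (ν ^ 2 : ℝ) ^ (n : ℝ) := Real.rpow_le_rpow hs.le hsν hn.le
    have h5 : ((ν ^ 2 : ℝ) ^ (n : ℝ))⁻¹ ≤ (s ^ n)⁻¹ := by
      apply inv_anti₀ (Real.rpow_pos_of_pos hs n) h4
    have h6 : (s ^ n)⁻¹ = t ^ n := by
      rw [← Real.inv_rpow hs.le]
      congr 1
      rw [hsdef]; field_simp
    rw [h6] at h5; exact h5
  have htn0 : (0:ℝ) ≤ t ^ n := Real.rpow_nonneg ht.le n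
  calc u t ≤ Real.exp 2 * (K0 * besselI ν (z / 2)) := hut
    _ ≤ Real.exp 2 * (K0 * ((z / 2 / 2) ^ ν / Real.Gamma (ν + 1) * Cz)) := by
        apply mul_le_mul_of_nonneg_left (mul_le_mul_of_nonneg_left hbessel hK0.le)
          (Real.exp_nonneg _)
    _ ≤ Real.exp 2 * (K0 * (t ^ n * Cz)) := by
        apply mul_le_mul_of_nonneg_left (mul_le_mul_of_nonneg_left ?_ hK0.le)
          (Real.exp_nonneg _)
        exact mul_le_mul_of_nonneg_right (le_trans hDiv htn) hCz0
    _ = Real.exp 2 * K0 * Cz * t ^ n := by ring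
    _ ≤ max 1 (Real.exp 2 * K0 * Cz) * t ^ n :=
        mul_le_mul_of_nonneg_right (le_max_right _ _) htn0
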